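/- Let V be a finite-dimensional real vector space and B a symmetric bilinear form on V. Let W be a subspace of V and let S = {v ∈ V : B(v, w) = 0 for all w ∈ W} be the B-orthogonal subspace to W. Then n₋(B) = n₋(B restricted to W) + n₋(B restricted to S) + dim(W ∩ S) − dim(W ∩ ker B), where ker B = {v ∈ V : B(v, u) = 0 for all u ∈ V} is the radical of B. -/

import Mathlib

/-- The negative index `n₋(B)` of a bilinear form `B`: the supremum of the
dimensions of the subspaces on which `B` is negative definite. -/
noncomputable def negIndex {V : Type*} [AddCommGroup V] [Module ℝ V]
    (B : LinearMap.BilinForm ℝ V) : ℕ :=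
  sSup {n : ℕ | ∃ W : Submodule ℝ V, (∀ v ∈ W, v ≠ 0 → B v v < 0) ∧
    Module.finrank ℝ ↥W = n}



open Module Submodule

namespace IndexAux

variable {V : Type*} [AddCommGroup V] [Module ℝ V]

/-- Negative definiteness of `B` on a submodule. -/
def NegDefOn (B : LinearMap.BilinForm ℝ V) (N : Submodule ℝ V) : Prop :=
  ∀ v ∈ N, v ≠ 0 → B v v < 0

/-- Positive semidefiniteness of `B` on a submodule. -/
def PosSemiOn (B : LinearMap.BilinForm ℝ V) (P : Submodule ℝ V) : Prop :=
  ∀ v ∈ P, 0 ≤ B v v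

/-- relative negative index -/
noncomputable def nIdx (B : LinearMap.BilinForm ℝ V) (T : Submodule ℝ V) : ℕ :=
  sSup {n : ℕ | ∃ N : Submodule ℝ V, N ≤ T ∧ NegDefOn B N ∧ finrank ℝ ↥N = n}

/-- relative positive semidefinite index -/
noncomputable def pIdx (B : LinearMap.BilinForm ℝ V) (T : Submodule ℝ V) : ℕ :=
  sSup {n : ℕ | ∃ P : Submodule ℝ V, P ≤ T ∧ PosSemiOn B P ∧ finrank ℝ ↥P = n}

variable [FiniteDimensional ℝ V] {B : LinearMap.BilinForm ℝ V} {T : Submodule ℝ V}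

lemma nSet_nonempty (B : LinearMap.BilinForm ℝ V) (T : Submodule ℝ V) :
    {n : ℕ | ∃ N : Submodule ℝ V, N ≤ T ∧ NegDefOn B N ∧ finrank ℝ ↥N = n}.Nonempty :=
  ⟨0, ⊥, bot_le, fun v hv h0 => absurd (Submodule.mem_bot ℝ |>.1 hv) h0, finrank_bot ℝ V⟩

lemma pSet_nonempty (B : LinearMap.BilinForm ℝ V) (T : Submodule ℝ V) :
    {n : ℕ | ∃ P : Submodule ℝ V, P ≤ T ∧ PosSemiOn B P ∧ finrank ℝ ↥P = n}.Nonempty :=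
  ⟨0, ⊥, bot_le, fun v hv => by rw [Submodule.mem_bot ℝ |>.1 hv]; simp, finrank_bot ℝ V⟩

lemma nSet_bdd (B : LinearMap.BilinForm ℝ V) (T : Submodule ℝ V) :
    BddAbove {n : ℕ | ∃ N : Submodule ℝ V, N ≤ T ∧ NegDefOn B N ∧ finrank ℝ ↥N = n} :=
  ⟨finrank ℝ V, fun n ⟨N, _, _, hn⟩ => hn ▸ N.finrank_le⟩

lemma pSet_bdd (B : LinearMap.BilinForm ℝ V) (T : Submodule ℝ V) :
    BddAbove {n : ℕ | ∃ P : Submodule ℝ V, P ≤ T ∧ PosSemiOn B P ∧ finrank ℝ ↥P = n} :=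
  ⟨finrank ℝ V, fun n ⟨P, _, _, hn⟩ => hn ▸ P.finrank_le⟩

lemma nIdx_attained (B : LinearMap.BilinForm ℝ V) (T : Submodule ℝ V) :
    ∃ N : Submodule ℝ V, N ≤ T ∧ NegDefOn B N ∧ finrank ℝ ↥N = nIdx B T :=
  Nat.sSup_mem (nSet_nonempty B T) (nSet_bdd B T)

lemma pIdx_attained (B : LinearMap.BilinForm ℝ V) (T : Submodule ℝ V) :
    ∃ P : Submodule ℝ V, P ≤ T ∧ PosSemiOn B P ∧ finrank ℝ ↥P = pIdx B T :=
  Nat.sSup_mem (pSet_nonempty B T) (pSet_bdd B T)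

lemma le_nIdx {N : Submodule ℝ V} (hNT : N ≤ T) (hN : NegDefOn B N) :
    finrank ℝ ↥N ≤ nIdx B T :=
  le_csSup (nSet_bdd B T) ⟨N, hNT, hN, rfl⟩

lemma le_pIdx {P : Submodule ℝ V} (hPT : P ≤ T) (hP : PosSemiOn B P) :
    finrank ℝ ↥P ≤ pIdx B T :=
  le_csSup (pSet_bdd B T) ⟨P, hPT, hP, rfl⟩

lemma nIdx_mono {T' : Submodule ℝ V} (h : T ≤ T') : nIdx B T ≤ nIdx B T' := by
  obtain ⟨N, hNT, hN, hrk⟩ := nIdx_attained B T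
  exact hrk ▸ le_nIdx (hNT.trans h) hN

lemma nIdx_eq_zero_of_isotropic (h : ∀ x ∈ T, B x x = 0) : nIdx B T = 0 := by
  refine Nat.le_antisymm (csSup_le (nSet_nonempty B T) ?_) (Nat.zero_le _)
  rintro n ⟨N, hNT, hN, rfl⟩
  have : N = ⊥ := by
    rw [eq_bot_iff]
    intro x hx
    rcases eq_or_ne x 0 with h0 | h0
    · simp [h0]
    · exact absurd (h x (hNT hx)) (ne_of_lt (hN x hx h0))
  simp [this]

end IndexAux

open Module Submodule

namespace IndexAux

variable {X : Type*} [AddCommGroup X] [Module ℝ X] {ι : Type*}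
  {C : LinearMap.BilinForm ℝ X}

lemma apply_self_eq_sum (b : Basis ι ℝ X) (hC : C.IsOrthoᵢ b) (x : X) :
    C x x = ∑ i ∈ (b.repr x).support,
      (b.repr x i) * (b.repr x i) * C (b i) (b i) := by
  rw [← LinearMap.BilinForm.sum_repr_mul_repr_mul b x x, Finsupp.sum]
  refine Finset.sum_congr rfl fun i hi => ?_
  rw [Finsupp.sum_eq_single i (fun j hj hji => by
    rw [hC (Ne.symm hji)]; simp) (by simp)]
  simp [smul_eq_mul]; ring

lemma negdef_span (b : Basis ι ℝ X) (hC : C.IsOrthoᵢ b) (s : Set ι)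
    (hneg : ∀ i ∈ s, C (b i) (b i) < 0) :
    ∀ x ∈ span ℝ (b '' s), x ≠ 0 → C x x < 0 := by
  intro x hx h0
  have hsupp : ↑(b.repr x).support ⊆ s := (Basis.mem_span_image b).1 hx
  have hne : (b.repr x).support.Nonempty := by
    rw [Finsupp.support_nonempty_iff]
    intro h
    exact h0 (by simpa using congrArg b.repr.symm h)
  rw [apply_self_eq_sum b hC]
  have := Finset.sum_lt_sum_of_nonempty hne (f := fun i =>
      (b.repr x i) * (b.repr x i) * C (b i) (b i)) (g := fun _ => (0:ℝ)) ?_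
  · simpa using this
  · intro i hi
    have h1 : b.repr x i ≠ 0 := Finsupp.mem_support_iff.1 hi
    have h2 : (0:ℝ) < b.repr x i * b.repr x i := mul_self_pos.2 h1
    exact mul_neg_of_pos_of_neg h2 (hneg i (hsupp hi))

lemma possemi_span (b : Basis ι ℝ X) (hC : C.IsOrthoᵢ b) (s : Set ι)
    (hpos : ∀ i ∈ s, 0 ≤ C (b i) (b i)) :
    ∀ x ∈ span ℝ (b '' s), 0 ≤ C x x := by
  intro x hx
  have hsupp : ↑(b.repr x).support ⊆ s := (Basis.mem_span_image b).1 hx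
  rw [apply_self_eq_sum b hC]
  refine Finset.sum_nonneg fun i hi => ?_
  exact mul_nonneg (mul_self_nonneg _) (hpos i (hsupp hi))

lemma finrank_span_image (b : Basis ι ℝ X) (s : Finset ι) :
    finrank ℝ ↥(span ℝ (b '' ↑s)) = s.card := by
  have h1 : (⇑b '' ↑s) = Set.range (⇑b ∘ ((↑) : {x // x ∈ s} → ι)) := by
    rw [Set.range_comp, Subtype.range_coe_subtype, Finset.setOf_mem]
  rw [h1, finrank_span_eq_card (b.linearIndependent.comp _ Subtype.coe_injective),
    Fintype.card_coe]

end IndexAux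

namespace IndexAux

variable {V : Type*} [AddCommGroup V] [Module ℝ V] [FiniteDimensional ℝ V]
  {B : LinearMap.BilinForm ℝ V}

lemma nIdx_add_pIdx (hsymm : ∀ x y, B x y = B y x) (T : Submodule ℝ V) :
    nIdx B T + pIdx B T = finrank ℝ ↥T := by
  refine le_antisymm ?_ ?_
  · obtain ⟨N, hNT, hN, hrkN⟩ := nIdx_attained B T
    obtain ⟨P, hPT, hP, hrkP⟩ := pIdx_attained B T
    have hdisj : N ⊓ P = ⊥ := by
      rw [eq_bot_iff]
      intro x ⟨hxN, hxP⟩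
      rcases eq_or_ne x 0 with h0 | h0
      · simp [h0]
      · exact absurd (hP x hxP) (not_le.2 (hN x hxN h0))
    have := Submodule.finrank_sup_add_finrank_inf_eq N P
    rw [hdisj] at this
    simp only [finrank_bot, add_zero] at this
    calc nIdx B T + pIdx B T = finrank ℝ ↥(N ⊔ P) := by rw [← hrkN, ← hrkP, this]
      _ ≤ finrank ℝ ↥T := Submodule.finrank_mono (sup_le hNT hPT)
  · classical
    set C := B.restrict T with hC
    have hCsymm : C.IsSymm := LinearMap.BilinForm.isSymm_def.2 fun x y => by
      simp [hC, LinearMap.BilinForm.restrict_apply, hsymm]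
    haveI : Invertible (2 : ℝ) := invertibleOfNonzero two_ne_zero
    obtain ⟨bT, hbT⟩ := LinearMap.BilinForm.exists_orthogonal_basis (LinearMap.BilinForm.isSymm_iff.1 hCsymm)
    set neg : Finset (Fin (finrank ℝ ↥T)) := {i | C (bT i) (bT i) < 0}.toFinset with hneg
    have hmemneg : ∀ i, i ∈ neg ↔ C (bT i) (bT i) < 0 := by
      intro i; simp [hneg]
    -- negative part
    have hNddef := negdef_span bT hbT ↑neg (fun i hi => (hmemneg i).1 hi)
    have hPdef := possemi_span bT hbT ↑negᶜ (fun i hi => by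
      have : ¬ C (bT i) (bT i) < 0 := by
        intro h; exact (by simpa [hmemneg] using hi : i ∉ neg) ((hmemneg i).2 h)
      linarith [not_lt.1 this])
    set N₀ : Submodule ℝ ↥T := span ℝ (⇑bT '' ↑neg) with hN₀
    set P₀ : Submodule ℝ ↥T := span ℝ (⇑bT '' ↑negᶜ) with hP₀
    have hrkN₀ : finrank ℝ ↥N₀ = neg.card := finrank_span_image bT neg
    have hrkP₀ : finrank ℝ ↥P₀ = negᶜ.card := finrank_span_image bT negᶜ
    have hNle : finrank ℝ ↥(N₀.map T.subtype) ≤ nIdx B T := by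
      refine le_nIdx (Submodule.map_subtype_le T N₀) ?_
      rintro _ ⟨x, hx, rfl⟩ h0
      have : (x : V) ≠ 0 → C x x < 0 := fun _ => hNddef x hx (fun h => h0 (by simp [h]))
      simpa [hC, LinearMap.BilinForm.restrict_apply] using
        hNddef x hx (fun h => h0 (by simp [h]))
    have hPle : finrank ℝ ↥(P₀.map T.subtype) ≤ pIdx B T := by
      refine le_pIdx (Submodule.map_subtype_le T P₀) ?_
      rintro _ ⟨x, hx, rfl⟩
      simpa [hC, LinearMap.BilinForm.restrict_apply] using hPdef x hx
    rw [Submodule.finrank_map_subtype_eq, hrkN₀] at hNle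
    rw [Submodule.finrank_map_subtype_eq, hrkP₀] at hPle
    have hcard : neg.card + negᶜ.card = finrank ℝ ↥T := by
      rw [Finset.card_add_card_compl, Fintype.card_fin]
    omega

lemma sup_additive (hsymm : ∀ x y, B x y = B y x) {U₁ U₂ : Submodule ℝ V}
    (hd : Disjoint U₁ U₂) (ho : ∀ x ∈ U₁, ∀ y ∈ U₂, B x y = 0) :
    nIdx B (U₁ ⊔ U₂) = nIdx B U₁ + nIdx B U₂ ∧
    pIdx B (U₁ ⊔ U₂) = pIdx B U₁ + pIdx B U₂ := by
  obtain ⟨N₁, hN₁T, hN₁, hrkN₁⟩ := nIdx_attained B U₁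
  obtain ⟨N₂, hN₂T, hN₂, hrkN₂⟩ := nIdx_attained B U₂
  obtain ⟨P₁, hP₁T, hP₁, hrkP₁⟩ := pIdx_attained B U₁
  obtain ⟨P₂, hP₂T, hP₂, hrkP₂⟩ := pIdx_attained B U₂
  have split : ∀ x ∈ U₁, ∀ y ∈ U₂, B (x + y) (x + y) = B x x + B y y := by
    intro x hx y hy
    have h1 : B x y = 0 := ho x hx y hy
    have h2 : B y x = 0 := by rw [hsymm]; exact h1
    simp [map_add, h1, h2]
  -- negative part is additive (≥)
  have hNsup : NegDefOn B (N₁ ⊔ N₂) := by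
    intro x hx h0
    obtain ⟨a, ha, b, hb, rfl⟩ := Submodule.mem_sup.1 hx
    rw [split a (hN₁T ha) b (hN₂T hb)]
    rcases eq_or_ne a 0 with h | h
    · have hb0 : b ≠ 0 := fun hb0 => h0 (by simp [h, hb0])
      have := hN₂ b hb hb0
      simp only [h, map_zero, LinearMap.zero_apply]
      linarith
    · have h1 := hN₁ a ha h
      rcases eq_or_ne b 0 with h' | h'
      · simp only [h', map_zero]
        linarith
      · linarith [hN₂ b hb h']
  have hPsup : PosSemiOn B (P₁ ⊔ P₂) := by
    intro x hx
    obtain ⟨a, ha, b, hb, rfl⟩ := Submodule.mem_sup.1 hx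
    rw [split a (hP₁T ha) b (hP₂T hb)]
    linarith [hP₁ a ha, hP₂ b hb]
  have hrkNsup : finrank ℝ ↥(N₁ ⊔ N₂) = finrank ℝ ↥N₁ + finrank ℝ ↥N₂ := by
    have hdN : N₁ ⊓ N₂ = ⊥ := (hd.mono hN₁T hN₂T).eq_bot
    have := Submodule.finrank_sup_add_finrank_inf_eq N₁ N₂
    rw [hdN, finrank_bot, add_zero] at this; omega
  have hrkPsup : finrank ℝ ↥(P₁ ⊔ P₂) = finrank ℝ ↥P₁ + finrank ℝ ↥P₂ := by
    have hdP : P₁ ⊓ P₂ = ⊥ := (hd.mono hP₁T hP₂T).eq_bot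
    have := Submodule.finrank_sup_add_finrank_inf_eq P₁ P₂
    rw [hdP, finrank_bot, add_zero] at this; omega
  have hn_ge : nIdx B U₁ + nIdx B U₂ ≤ nIdx B (U₁ ⊔ U₂) := by
    rw [← hrkN₁, ← hrkN₂, ← hrkNsup]
    exact le_nIdx (sup_le (hN₁T.trans le_sup_left) (hN₂T.trans le_sup_right)) hNsup
  have hp_ge : pIdx B U₁ + pIdx B U₂ ≤ pIdx B (U₁ ⊔ U₂) := by
    rw [← hrkP₁, ← hrkP₂, ← hrkPsup]
    exact le_pIdx (sup_le (hP₁T.trans le_sup_left) (hP₂T.trans le_sup_right)) hPsup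
  have e1 := nIdx_add_pIdx hsymm (U₁ ⊔ U₂)
  have e2 := nIdx_add_pIdx hsymm U₁
  have e3 := nIdx_add_pIdx hsymm U₂
  have e4 : finrank ℝ ↥(U₁ ⊔ U₂) = finrank ℝ ↥U₁ + finrank ℝ ↥U₂ := by
    have := Submodule.finrank_sup_add_finrank_inf_eq U₁ U₂
    rw [hd.eq_bot, finrank_bot, add_zero] at this; omega
  omega

end IndexAux


namespace IndexAux

variable {V : Type*} [AddCommGroup V] [Module ℝ V] [FiniteDimensional ℝ V]
  {B : LinearMap.BilinForm ℝ V}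

lemma pIdx_mono {T T' : Submodule ℝ V} (h : T ≤ T') : pIdx B T ≤ pIdx B T' := by
  obtain ⟨P, hPT, hP, hrk⟩ := pIdx_attained B T
  exact hrk ▸ le_pIdx (hPT.trans h) hP

lemma nIdx_span_singleton_neg {x : V} (hx : B x x < 0) : nIdx B (span ℝ {x}) = 1 := by
  have hx0 : x ≠ 0 := fun h => by simp [h] at hx
  refine le_antisymm (csSup_le (nSet_nonempty B _) ?_) ?_
  · rintro n ⟨N, hNT, hN, rfl⟩
    calc finrank ℝ ↥N ≤ finrank ℝ ↥(span ℝ {x}) := Submodule.finrank_mono hNT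
      _ = 1 := finrank_span_singleton hx0
  · have hnd : NegDefOn B (span ℝ {x}) := by
      intro v hv hv0
      obtain ⟨a, rfl⟩ := Submodule.mem_span_singleton.1 hv
      have ha : a ≠ 0 := fun h => hv0 (by simp [h])
      have : B (a • x) (a • x) = a * a * B x x := by
        simp [map_smul, smul_eq_mul]; ring
      rw [this]
      exact mul_neg_of_pos_of_neg (mul_self_pos.2 ha) hx
    have := le_nIdx (le_refl (span ℝ {x})) hnd
    rwa [finrank_span_singleton hx0] at this

lemma one_le_pIdx_span_singleton {x : V} (hx : 0 ≤ B x x) (hx0 : x ≠ 0) :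
    1 ≤ pIdx B (span ℝ {x}) := by
  have hp : PosSemiOn B (span ℝ {x}) := by
    intro v hv
    obtain ⟨a, rfl⟩ := Submodule.mem_span_singleton.1 hv
    have : B (a • x) (a • x) = a * a * B x x := by
      simp [map_smul, smul_eq_mul]; ring
    rw [this]
    exact mul_nonneg (mul_self_nonneg a) hx
  have := le_pIdx (le_refl (span ℝ {x})) hp
  rwa [finrank_span_singleton hx0] at this

/-- Existence of a complement of a submodule inside a larger submodule. -/
lemma exists_compl_le {A C : Submodule ℝ V} (h : A ≤ C) :
    ∃ A' : Submodule ℝ V, A' ≤ C ∧ Disjoint A A' ∧ A ⊔ A' = C := by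
  obtain ⟨Y, hY⟩ := Submodule.exists_isCompl (A.comap C.subtype)
  refine ⟨Y.map C.subtype, Submodule.map_subtype_le C Y, ?_, ?_⟩
  · rw [disjoint_def]
    intro x hxA hxA'
    obtain ⟨y, hyY, rfl⟩ := hxA'
    have : y ∈ A.comap C.subtype ⊓ Y := ⟨hxA, hyY⟩
    rw [hY.inf_eq_bot] at this
    have hy0 : y = 0 := (Submodule.mem_bot _).1 this
    simp [hy0]
  · have h1 : A = (A.comap C.subtype).map C.subtype := by
      rw [Submodule.map_comap_subtype, inf_eq_right.2 h]
    rw [h1, ← Submodule.map_sup, hY.sup_eq_top, Submodule.map_top, Submodule.range_subtype]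

lemma negIndex_restrict_eq_nIdx (B : LinearMap.BilinForm ℝ V) (T : Submodule ℝ V) :
    negIndex (B.restrict T) = nIdx B T := by
  unfold negIndex nIdx
  congr 1
  ext n
  constructor
  · rintro ⟨N', hN', rfl⟩
    refine ⟨N'.map T.subtype, Submodule.map_subtype_le T N', ?_,
      (Submodule.finrank_map_subtype_eq T N').symm ▸ rfl⟩
    rintro _ ⟨x, hx, rfl⟩ h0
    simpa using hN' x hx (fun h => h0 (by simp [h]))
  · rintro ⟨N, hNT, hN, rfl⟩
    refine ⟨N.comap T.subtype, ?_, ?_⟩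
    · intro v hv hv0
      have : (v : V) ≠ 0 := fun h => hv0 (Subtype.coe_injective (by simpa using h))
      simpa using hN v hv this
    · have h1 : (N.comap T.subtype).map T.subtype = N := by
        rw [Submodule.map_comap_subtype, inf_eq_right.2 hNT]
      conv_rhs => rw [← h1, Submodule.finrank_map_subtype_eq]

lemma negIndex_eq_nIdx_top (B : LinearMap.BilinForm ℝ V) :
    negIndex B = nIdx B ⊤ := by
  unfold negIndex nIdx
  congr 1
  ext n
  exact ⟨fun ⟨N, hN, hrk⟩ => ⟨N, le_top, hN, hrk⟩, fun ⟨N, _, hN, hrk⟩ => ⟨N, hN, hrk⟩⟩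

end IndexAux

namespace IndexAux

variable {V : Type*} [AddCommGroup V] [Module ℝ V] [FiniteDimensional ℝ V]
  {B : LinearMap.BilinForm ℝ V}

/-- Key lemma: adding a totally isotropic subspace `Z₂` (trivially intersecting the
radical of `B` on `T`) to its orthogonal complement `S'` in `T` increases the
negative index by `finrank Z₂`. -/
lemma iso_step (hsymm : ∀ x y, B x y = B y x) :
    ∀ n : ℕ, ∀ T Z₂ S' : Submodule ℝ V, finrank ℝ ↥Z₂ = n →
    Z₂ ≤ T →
    (∀ z ∈ Z₂, ∀ z' ∈ Z₂, B z z' = 0) →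
    (∀ z ∈ Z₂, (∀ t ∈ T, B z t = 0) → z = 0) →
    (∀ w, w ∈ S' ↔ w ∈ T ∧ ∀ z ∈ Z₂, B w z = 0) →
    nIdx B T = nIdx B S' + n := by
  intro n
  induction n with
  | zero =>
    intro T Z₂ S' hrk hle hiso hker hS'
    have hZ : Z₂ = ⊥ := Submodule.finrank_eq_zero.1 hrk
    have hST : S' = T := by
      ext w
      rw [hS', hZ]
      simp
    simp [hST]
  | succ n ih =>
    intro T Z₂ S' hrk hle hiso hker hS'
    have hZne : Z₂ ≠ ⊥ := by
      intro h
      rw [h] at hrk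
      simp [finrank_bot] at hrk
    obtain ⟨z, hzZ, hz0⟩ := Submodule.exists_mem_ne_zero_of_ne_bot hZne
    have hzT : z ∈ T := hle hzZ
    have hzz : B z z = 0 := hiso z hzZ z hzZ
    -- find a dual vector
    have hex : ¬ ∀ t ∈ T, B z t = 0 := fun h => hz0 (hker z hzZ h)
    push_neg at hex
    obtain ⟨t₀, ht₀T, ht₀⟩ := hex
    obtain ⟨t, htT, hzt⟩ : ∃ t, t ∈ T ∧ B z t = 1 :=
      ⟨(B z t₀)⁻¹ • t₀, T.smul_mem _ ht₀T, by
        rw [map_smul, smul_eq_mul, inv_mul_cancel₀ ht₀]⟩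
    have htz : B t z = 1 := by rw [hsymm]; exact hzt
    obtain ⟨v, hvT, hzv, hvv⟩ : ∃ v, v ∈ T ∧ B z v = 1 ∧ B v v = 0 := by
      refine ⟨t - ((B t t)/2) • z, T.sub_mem htT (T.smul_mem _ hzT), ?_, ?_⟩
      · rw [map_sub, map_smul, smul_eq_mul, hzt, hzz]
        ring
      · simp only [map_sub, map_smul, LinearMap.sub_apply, LinearMap.smul_apply,
          smul_eq_mul, hzt, htz, hzz]
        ring
    have hvz : B v z = 1 := by rw [hsymm]; exact hzv
    -- the orthogonal complement of the hyperbolic plane in T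
    set T' : Submodule ℝ V := T ⊓ LinearMap.ker (B z) ⊓ LinearMap.ker (B v) with hT'
    have hmemT' : ∀ x, x ∈ T' ↔ x ∈ T ∧ B z x = 0 ∧ B v x = 0 := by
      intro x
      simp [hT', Submodule.mem_inf, LinearMap.mem_ker, and_assoc]
    -- the hyperbolic plane
    set H : Submodule ℝ V := span ℝ {z, v} with hH
    have hHT : H ≤ T := by
      rw [hH, Submodule.span_le]
      rintro x (rfl | rfl)
      · exact hzT
      · exact hvT
    have hzH : z ∈ H := Submodule.subset_span (Set.mem_insert _ _)
    have hvH : v ∈ H := Submodule.subset_span (Set.mem_insert_of_mem _ rfl)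
    have horthHT' : ∀ x ∈ H, ∀ y ∈ T', B x y = 0 := by
      intro x hx y hy
      obtain ⟨a, b, rfl⟩ := Submodule.mem_span_pair.1 hx
      obtain ⟨-, hy1, hy2⟩ := (hmemT' y).1 hy
      simp [map_add, map_smul, hy1, hy2]
    have hdisjHT' : Disjoint H T' := by
      rw [disjoint_def]
      intro x hxH hxT'
      obtain ⟨a, b, rfl⟩ := Submodule.mem_span_pair.1 hxH
      obtain ⟨-, hy1, hy2⟩ := (hmemT' _).1 hxT'
      simp only [map_add, map_smul, smul_eq_mul, hzz, hzv, hvz, hvv] at hy1 hy2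
      have hb : b = 0 := by linarith [hy1]
      have ha : a = 0 := by linarith [hy2]
      simp [ha, hb]
    have hsupHT' : H ⊔ T' = T := by
      refine le_antisymm (sup_le hHT (le_trans (le_trans inf_le_left inf_le_left) le_rfl)) ?_
      intro x hx
      have hh : (B v x) • z + (B z x) • v ∈ H := H.add_mem (H.smul_mem _ hzH) (H.smul_mem _ hvH)
      have hrest : x - ((B v x) • z + (B z x) • v) ∈ T' := by
        refine (hmemT' _).2 ⟨T.sub_mem hx (T.add_mem (T.smul_mem _ hzT) (T.smul_mem _ hvT)), ?_, ?_⟩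
        · simp [map_sub, map_add, map_smul, hzz, hzv, smul_eq_mul]
        · simp [map_sub, map_add, map_smul, hvz, hvv, smul_eq_mul]
      have : x = ((B v x) • z + (B z x) • v) + (x - ((B v x) • z + (B z x) • v)) := by abel
      rw [this]
      exact Submodule.add_mem _ (le_sup_left (α := Submodule ℝ V) hh)
        (le_sup_right (α := Submodule ℝ V) hrest)
    -- the hyperbolic plane has negative index 1 and positive index 1
    have hzmv : B (z - v) (z - v) < 0 := by
      simp only [map_sub, LinearMap.sub_apply, hzz, hzv, hvz, hvv]
      norm_num
    have hzpv : 0 ≤ B (z + v) (z + v) := by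
      simp only [map_add, LinearMap.add_apply, hzz, hzv, hvz, hvv]
      norm_num
    have hzpv0 : z + v ≠ 0 := by
      intro h
      have := congrArg (B z) h
      simp [map_add, hzz, hzv] at this
    have hli : LinearIndependent ℝ ![z, v] := by
      rw [LinearIndependent.pair_iff]
      intro s r hsr
      have h1 := congrArg (B z) hsr
      have h2 := congrArg (B v) hsr
      simp only [map_add, map_smul, smul_eq_mul, hzz, hzv, hvz, hvv, map_zero] at h1 h2
      constructor <;> linarith
    have hrkH : finrank ℝ ↥H = 2 := by
      have hr : Set.range ![z, v] = {z, v} := by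
        simp [Matrix.range_cons, Matrix.range_empty, Set.pair_comm v z]
      rw [hH, ← hr, finrank_span_eq_card hli]
      simp
    have hnH : nIdx B H = 1 := by
      have h1 : 1 ≤ nIdx B H := by
        have hsub : span ℝ {z - v} ≤ H := by
          rw [Submodule.span_le, Set.singleton_subset_iff]
          exact H.sub_mem hzH hvH
        calc 1 = nIdx B (span ℝ {z - v}) := (nIdx_span_singleton_neg hzmv).symm
          _ ≤ nIdx B H := nIdx_mono hsub
      have h2 : 1 ≤ pIdx B H := by
        have hsub : span ℝ {z + v} ≤ H := by
          rw [Submodule.span_le, Set.singleton_subset_iff]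
          exact H.add_mem hzH hvH
        calc 1 ≤ pIdx B (span ℝ {z + v}) := one_le_pIdx_span_singleton hzpv hzpv0
          _ ≤ pIdx B H := pIdx_mono hsub
      have h3 := nIdx_add_pIdx hsymm H
      rw [hrkH] at h3
      omega
    -- decompose T
    obtain ⟨hTn, -⟩ := sup_additive hsymm hdisjHT' horthHT'
    rw [hsupHT'] at hTn
    -- the new isotropic subspace
    set Z₂' : Submodule ℝ V := Z₂ ⊓ T' with hZ₂'
    have hzspanZ : span ℝ {z} ≤ Z₂ := by
      rw [Submodule.span_le, Set.singleton_subset_iff]; exact hzZ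
    have hZsup : span ℝ {z} ⊔ Z₂' = Z₂ := by
      refine le_antisymm (sup_le hzspanZ inf_le_left) ?_
      intro z' hz'
      have hsplit : z' - (B v z') • z ∈ Z₂' := by
        refine ⟨Z₂.sub_mem hz' (Z₂.smul_mem _ hzZ), (hmemT' _).2
          ⟨T.sub_mem (hle hz') (T.smul_mem _ hzT), ?_, ?_⟩⟩
        · simp [map_sub, map_smul, hzz, smul_eq_mul, hiso z hzZ z' hz']
        · simp [map_sub, map_smul, hvz, smul_eq_mul]
      refine Submodule.mem_sup.2 ⟨(B v z') • z,
        Submodule.smul_mem _ _ (Submodule.mem_span_singleton_self z), _, hsplit, by abel⟩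
    have hdisj_zT' : ∀ Y : Submodule ℝ V, Y ≤ T' → Disjoint (span ℝ {z}) Y := by
      intro Y hY
      rw [disjoint_def]
      intro x hxz hxY
      obtain ⟨a, rfl⟩ := Submodule.mem_span_singleton.1 hxz
      obtain ⟨-, -, h2⟩ := (hmemT' _).1 (hY hxY)
      rw [map_smul, hvz, smul_eq_mul, mul_one] at h2
      simp [h2]
    have hdisjZ : Disjoint (span ℝ {z}) Z₂' := hdisj_zT' _ inf_le_right
    have hrkZ₂' : finrank ℝ ↥Z₂' = n := by
      have := Submodule.finrank_sup_add_finrank_inf_eq (span ℝ {z}) Z₂'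
      rw [hZsup, hdisjZ.eq_bot, finrank_bot, finrank_span_singleton hz0, hrk] at this
      omega
    -- IH hypotheses
    have hle' : Z₂' ≤ T' := inf_le_right
    have hiso' : ∀ a ∈ Z₂', ∀ b ∈ Z₂', B a b = 0 :=
      fun a ha b hb => hiso a ha.1 b hb.1
    have hker' : ∀ a ∈ Z₂', (∀ s ∈ T', B a s = 0) → a = 0 := by
      intro a ha hav
      refine hker a ha.1 ?_
      intro s hs
      rw [← hsupHT'] at hs
      obtain ⟨h₁, hh₁, t', ht', rfl⟩ := Submodule.mem_sup.1 hs
      obtain ⟨c, d, rfl⟩ := Submodule.mem_span_pair.1 hh₁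
      have haz : B a z = 0 := hiso a ha.1 z hzZ
      have hav' : B a v = 0 := by
        rw [hsymm]
        exact ((hmemT' a).1 ha.2).2.2
      rw [map_add, map_add, map_smul, map_smul, haz, hav', hav t' ht']
      simp
    have hS'' : ∀ w, w ∈ S' ⊓ T' ↔ w ∈ T' ∧ ∀ a ∈ Z₂', B w a = 0 := by
      intro w
      constructor
      · rintro ⟨hwS, hwT'⟩
        exact ⟨hwT', fun a ha => ((hS' w).1 hwS).2 a ha.1⟩
      · rintro ⟨hwT', hwa⟩
        refine ⟨(hS' w).2 ⟨((hmemT' w).1 hwT').1, ?_⟩, hwT'⟩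
        intro ζ hζ
        rw [← hZsup] at hζ
        obtain ⟨y, hy, a, ha, rfl⟩ := Submodule.mem_sup.1 hζ
        obtain ⟨c, rfl⟩ := Submodule.mem_span_singleton.1 hy
        have hwz : B w z = 0 := by
          rw [hsymm]
          exact ((hmemT' w).1 hwT').2.1
        rw [map_add, map_smul, hwz, hwa a ha]
        simp
    have hIH := ih T' Z₂' (S' ⊓ T') hrkZ₂' hle' hiso' hker' hS''
    -- decompose S'
    have hzS' : z ∈ S' := (hS' z).2 ⟨hzT, fun z' hz' => hiso z hzZ z' hz'⟩
    have hS'sup : span ℝ {z} ⊔ (S' ⊓ T') = S' := by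
      refine le_antisymm (sup_le (by
        rw [Submodule.span_le, Set.singleton_subset_iff]; exact hzS') inf_le_left) ?_
      intro s hs
      have hsplit : s - (B v s) • z ∈ S' ⊓ T' := by
        refine ⟨S'.sub_mem hs (S'.smul_mem _ hzS'), (hmemT' _).2
          ⟨T.sub_mem ((hS' s).1 hs).1 (T.smul_mem _ hzT), ?_, ?_⟩⟩
        · have h0 : B s z = 0 := ((hS' s).1 hs).2 z hzZ
          have hzs : B z s = 0 := by rw [hsymm]; exact h0
          simp [map_sub, map_smul, hzz, smul_eq_mul, hzs]
        · simp [map_sub, map_smul, hvz, smul_eq_mul]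
      refine Submodule.mem_sup.2 ⟨(B v s) • z,
        Submodule.smul_mem _ _ (Submodule.mem_span_singleton_self z), _, hsplit, by abel⟩
    have hdisjS : Disjoint (span ℝ {z}) (S' ⊓ T') := hdisj_zT' _ inf_le_right
    have horthS : ∀ x ∈ span ℝ {z}, ∀ y ∈ S' ⊓ T', B x y = 0 := by
      intro x hx y hy
      obtain ⟨a, rfl⟩ := Submodule.mem_span_singleton.1 hx
      obtain ⟨-, h1, -⟩ := (hmemT' y).1 hy.2
      simp [map_smul, h1]
    obtain ⟨hSn, -⟩ := sup_additive hsymm hdisjS horthS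
    rw [hS'sup] at hSn
    have hz_iso : nIdx B (span ℝ {z}) = 0 := by
      refine nIdx_eq_zero_of_isotropic ?_
      intro x hx
      obtain ⟨a, rfl⟩ := Submodule.mem_span_singleton.1 hx
      simp [map_smul, smul_eq_mul, hzz]
    rw [hz_iso, zero_add] at hSn
    rw [hTn, hnH, hIH, ← hSn]
    omega

end IndexAux


open IndexAux Module Submodule in
/-- For a symmetric bilinear form `B` on a finite-dimensional real
vector space `V`, a subspace `W` and its `B`-orthogonal subspace `S`,
`n₋(B) = n₋(B|_W) + n₋(B|_S) + dim (W ∩ S) − dim (W ∩ ker B)`. -/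
theorem index_formula_finite_dim {V : Type*} [AddCommGroup V] [Module ℝ V]
    [FiniteDimensional ℝ V]
    (B : LinearMap.BilinForm ℝ V) (hBsymm : ∀ x y, B x y = B y x)
    (W S : Submodule ℝ V)
    (hS : ∀ v, v ∈ S ↔ ∀ w ∈ W, B v w = 0) :
    (negIndex B : ℤ) =
      (negIndex (LinearMap.BilinForm.restrict B W) : ℤ)
        + (negIndex (LinearMap.BilinForm.restrict B S) : ℤ)
        + (Module.finrank ℝ ↥(W ⊓ S) : ℤ)
        - (Module.finrank ℝ ↥(W ⊓ LinearMap.ker B) : ℤ) := by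
  classical
  have hrefl : B.IsRefl := fun x y h => by rw [hBsymm]; exact h
  set Z : Submodule ℝ V := W ⊓ S with hZdef
  set K : Submodule ℝ V := W ⊓ LinearMap.ker B with hKdef
  have hKZ : K ≤ Z := by
    rintro x ⟨hxW, hxk⟩
    refine ⟨hxW, (hS x).2 fun w _ => ?_⟩
    have hx0 : B x = 0 := LinearMap.mem_ker.1 hxk
    simp [hx0]
  obtain ⟨Z₂, hZ₂Z, hdisjKZ₂, hKZ₂⟩ := exists_compl_le hKZ
  obtain ⟨W₁, hW₁W, hdisjZW₁, hZW₁⟩ := exists_compl_le (inf_le_left : Z ≤ W)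
  have hZS : Z ≤ S := inf_le_right
  have hZW : Z ≤ W := inf_le_left
  -- the form vanishes identically on Z
  have horthZW : ∀ x ∈ Z, ∀ w ∈ W, B x w = 0 := fun x hx w hw => (hS x).1 hx.2 w hw
  -- Z ⊔ W₁ = W is an orthogonal decomposition
  have horthW : ∀ x ∈ Z, ∀ y ∈ W₁, B x y = 0 := fun x hx y hy => horthZW x hx y (hW₁W hy)
  have hnW := (sup_additive hBsymm hdisjZW₁ horthW).1
  rw [hZW₁] at hnW
  have hnZ : nIdx B Z = 0 := nIdx_eq_zero_of_isotropic (fun x hx => horthZW x hx x hx.1)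
  rw [hnZ, zero_add] at hnW
  -- B restricted to W₁ is nondegenerate
  have hnd : (B.restrict W₁).Nondegenerate := by
    refine (LinearMap.IsRefl.nondegenerate_iff_separatingLeft (B := B.restrict W₁) fun x y h => hrefl _ _ h).2 ?_
    intro x hx
    have hBxW : ∀ w ∈ W, B (x : V) w = 0 := by
      intro w hw
      rw [← hZW₁] at hw
      obtain ⟨zz, hzz, w₁, hw₁, rfl⟩ := Submodule.mem_sup.1 hw
      have h1 : B (x : V) zz = 0 := by
        rw [hBsymm]
        exact horthZW zz hzz x (hW₁W x.2)
      have h2 : B (x : V) w₁ = 0 := hx ⟨w₁, hw₁⟩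
      rw [map_add, h1, h2, add_zero]
    have hxZ : (x : V) ∈ Z := ⟨hW₁W x.2, (hS x).2 hBxW⟩
    have : (x : V) ∈ (⊥ : Submodule ℝ V) := hdisjZW₁.le_bot ⟨hxZ, x.2⟩
    exact Subtype.coe_injective (by simpa using this)
  have hcompl : IsCompl W₁ (B.orthogonal W₁) :=
    LinearMap.BilinForm.isCompl_orthogonal_of_restrict_nondegenerate hrefl hnd
  set U : Submodule ℝ V := B.orthogonal W₁ with hUdef
  have hmemU : ∀ u, u ∈ U ↔ ∀ y ∈ W₁, B y u = 0 := fun u => Iff.rfl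
  have horthWU : ∀ x ∈ W₁, ∀ y ∈ U, B x y = 0 := fun x hx y hy => (hmemU y).1 hy x hx
  have hnTop := (sup_additive hBsymm hcompl.disjoint horthWU).1
  rw [hcompl.sup_eq_top] at hnTop
  -- S sits inside U
  have hSU : S ≤ U := by
    intro s hs
    refine (hmemU s).2 fun y hy => ?_
    rw [hBsymm]
    exact (hS s).1 hs y (hW₁W hy)
  -- apply the isotropic extension lemma inside U
  have hU : nIdx B U = nIdx B S + finrank ℝ ↥Z₂ := by
    refine iso_step hBsymm (finrank ℝ ↥Z₂) U Z₂ S rfl (hZ₂Z.trans (hZS.trans hSU)) ?_ ?_ ?_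
    · exact fun z hz z' hz' => horthZW z (hZ₂Z hz) z' (hZW (hZ₂Z hz'))
    · intro z hz h0
      have hzker : z ∈ LinearMap.ker B := by
        rw [LinearMap.mem_ker]
        ext x
        have hx : x ∈ W₁ ⊔ U := by rw [hcompl.sup_eq_top]; exact Submodule.mem_top
        obtain ⟨w₁, hw₁, u, hu, rfl⟩ := Submodule.mem_sup.1 hx
        have h1 : B z w₁ = 0 := horthZW z (hZ₂Z hz) w₁ (hW₁W hw₁)
        have h2 : B z u = 0 := h0 u hu
        simp [map_add, h1, h2]
      have : z ∈ (⊥ : Submodule ℝ V) :=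
        hdisjKZ₂.le_bot ⟨⟨hZW (hZ₂Z hz), hzker⟩, hz⟩
      simpa using this
    · intro w
      constructor
      · intro hw
        exact ⟨hSU hw, fun z hz => (hS w).1 hw z (hZW (hZ₂Z hz))⟩
      · rintro ⟨hwU, hwz⟩
        refine (hS w).2 fun ω hω => ?_
        have hω' : ω ∈ Z ⊔ W₁ := by rw [hZW₁]; exact hω
        obtain ⟨ζ, hζ, w₁, hw₁, rfl⟩ := Submodule.mem_sup.1 hω'
        have hζ' : ζ ∈ K ⊔ Z₂ := by rw [hKZ₂]; exact hζ
        obtain ⟨k, hk, z₂, hz₂, rfl⟩ := Submodule.mem_sup.1 hζ'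
        have h1 : B w k = 0 := by
          rw [hBsymm]
          have hk0 : B k = 0 := LinearMap.mem_ker.1 hk.2
          simp [hk0]
        have h2 : B w z₂ = 0 := hwz z₂ hz₂
        have h3 : B w w₁ = 0 := by
          rw [hBsymm]
          exact (hmemU w).1 hwU w₁ hw₁
        simp [map_add, h1, h2, h3]
  -- rank bookkeeping
  have hrkZ : finrank ℝ ↥Z = finrank ℝ ↥K + finrank ℝ ↥Z₂ := by
    have := Submodule.finrank_sup_add_finrank_inf_eq K Z₂
    rw [hKZ₂, hdisjKZ₂.eq_bot, finrank_bot, add_zero] at this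
    omega
  rw [negIndex_eq_nIdx_top, negIndex_restrict_eq_nIdx, negIndex_restrict_eq_nIdx]
  omega
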